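/- For every integer m ≥ 2, the formal power series G_m satisfies G_m · (1 − t·H_{m−2}) = t · G_{m−1} in ℤ⟦t⟧; equivalently, G_m = t·G_{m−1} + t·H_{m−2}·G_m. -/

import Mathlib

set_option maxHeartbeats 1000000

/-- A Catalan word: a word of positive integers starting with 1 in which each
letter exceeds its predecessor by at most 1. -/
def IsCatalanWord {n : ℕ} (w : Fin n → ℕ) : Prop :=
  (∀ i, 1 ≤ w i) ∧ (∀ h : 0 < n, w ⟨0, h⟩ = 1) ∧
  ∀ i : ℕ, ∀ h : i + 1 < n, w ⟨i + 1, h⟩ ≤ w ⟨i, by omega⟩ + 1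

/-- `H m` is the formal power series in `ℤ⟦t⟧` whose coefficient of `t^n` (for
`n ≥ 1`) is the number of words `w₁ ⋯ wₙ` with letters in `{1, …, m}` satisfying
`w_{i+1} ≤ w_i + 1` and `w_{i+1} ≠ w_i`, ending with `wₙ = m`; its constant
coefficient is `0`, and `H 0 = 0`. -/
noncomputable def H (m : ℕ) : PowerSeries ℤ :=
  PowerSeries.mk fun n =>
    (Set.ncard {w : Fin n → ℕ |
      (∀ i, 1 ≤ w i ∧ w i ≤ m) ∧
      (∀ i : ℕ, ∀ h : i + 1 < n,
        w ⟨i + 1, h⟩ ≤ w ⟨i, by omega⟩ + 1 ∧ w ⟨i + 1, h⟩ ≠ w ⟨i, by omega⟩) ∧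
      ∃ h : 0 < n, w ⟨n - 1, by omega⟩ = m} : ℤ)

/-- For `m ≥ 2`, `G m` is the formal power series in `ℤ⟦t⟧` whose coefficient of
`t^n` (for `n ≥ 1`) is the number of Catalan words of length `n` with no two
equal adjacent letters whose largest letter is `m - 1` and whose last letter is
`m - 1` (constant coefficient `0`); `G 1 = 1`. -/
noncomputable def G (m : ℕ) : PowerSeries ℤ :=
  if m = 1 then 1 else
  PowerSeries.mk fun n =>
    (Set.ncard {w : Fin n → ℕ | IsCatalanWord w ∧
      (∀ i : ℕ, ∀ h : i + 1 < n, w ⟨i + 1, h⟩ ≠ w ⟨i, by omega⟩) ∧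
      (∀ i, w i ≤ m - 1) ∧ (∃ i, w i = m - 1) ∧
      ∃ h : 0 < n, w ⟨n - 1, by omega⟩ = m - 1} : ℤ)


open scoped Classical

namespace GRecAux


def gset (M n : ℕ) : Set (Fin n → ℕ) :=
  {w | IsCatalanWord w ∧
    (∀ i : ℕ, ∀ h : i + 1 < n, w ⟨i + 1, h⟩ ≠ w ⟨i, by omega⟩) ∧
    (∀ i, w i ≤ M) ∧ (∃ i, w i = M) ∧
    ∃ h : 0 < n, w ⟨n - 1, by omega⟩ = M}

def hset (M n : ℕ) : Set (Fin n → ℕ) :=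
  {w | (∀ i, 1 ≤ w i ∧ w i ≤ M) ∧
    (∀ i : ℕ, ∀ h : i + 1 < n,
      w ⟨i + 1, h⟩ ≤ w ⟨i, by omega⟩ + 1 ∧ w ⟨i + 1, h⟩ ≠ w ⟨i, by omega⟩) ∧
    ∃ h : 0 < n, w ⟨n - 1, by omega⟩ = M}

lemma coeff_H (m n : ℕ) :
    (PowerSeries.coeff n) (H m) = ((hset m n).ncard : ℤ) := by
  simp only [H, PowerSeries.coeff_mk]; rfl

lemma coeff_G (m n : ℕ) (hm : m ≠ 1) :
    (PowerSeries.coeff n) (G m) = ((gset (m - 1) n).ncard : ℤ) := by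
  simp only [G, if_neg hm, PowerSeries.coeff_mk]; rfl

lemma gset_finite (M n : ℕ) : (gset M n).Finite := by
  apply Set.Finite.subset (Set.Finite.pi (fun i : Fin n => Set.finite_Iic M))
  intro w hw i _
  exact hw.2.2.1 i

lemma hset_finite (M n : ℕ) : (hset M n).Finite := by
  apply Set.Finite.subset (Set.Finite.pi (fun i : Fin n => Set.finite_Iic M))
  intro w hw i _
  exact (hw.1 i).2

lemma ncard_prod {α β : Type*} (s : Set α) (t : Set β) :
    (s ×ˢ t).ncard = s.ncard * t.ncard := by
  rw [← Nat.card_coe_set_eq, ← Nat.card_coe_set_eq, ← Nat.card_coe_set_eq,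
    ← Nat.card_prod]
  exact Nat.card_congr (Equiv.Set.prod s t)


lemma gset_zero (M : ℕ) : gset M 0 = ∅ := by
  ext w; simp [gset]

/-- drop the last letter -/
def drop (nn : ℕ) (w : Fin (nn+1) → ℕ) : Fin nn → ℕ :=
  fun i => w ⟨i.1, Nat.lt_succ_of_lt i.2⟩

lemma drop_apply (nn : ℕ) (w : Fin (nn+1) → ℕ) (j : ℕ) (h : j < nn) :
    drop nn w ⟨j, h⟩ = w ⟨j, by omega⟩ := rfl

/-- append the letter `c` -/
def snocc (nn c : ℕ) (u : Fin nn → ℕ) : Fin (nn+1) → ℕ :=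
  fun i => if h : i.1 < nn then u ⟨i.1, h⟩ else c

lemma snocc_lt (nn c : ℕ) (u : Fin nn → ℕ) (j : ℕ) (h : j < nn) (h' : j < nn+1) :
    snocc nn c u ⟨j, h'⟩ = u ⟨j, h⟩ := by
  simp only [snocc]; rw [dif_pos h]

lemma snocc_last (nn c : ℕ) (u : Fin nn → ℕ) (h' : nn < nn+1) :
    snocc nn c u ⟨nn, h'⟩ = c := by
  simp only [snocc]; rw [dif_neg (by omega)]

lemma fiberA (K nn : ℕ) (hK : 1 ≤ K) :
    {w : Fin (nn+1) → ℕ | w ∈ gset (K+1) (nn+1) ∧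
      ∀ j : ℕ, ∀ h : j < nn, w ⟨j, by omega⟩ ≠ K+1}.ncard
    = (gset K nn).ncard := by
  rcases Nat.eq_zero_or_pos nn with h0 | h0
  · subst h0
    have hempty : {w : Fin (0+1) → ℕ | w ∈ gset (K+1) (0+1) ∧
        ∀ j : ℕ, ∀ h : j < 0, w ⟨j, by omega⟩ ≠ K+1} = ∅ := by
      ext w
      simp only [Set.mem_setOf_eq, Set.mem_empty_iff_false, iff_false]
      rintro ⟨⟨⟨_, hfirst, _⟩, _, _, _, _, hlast⟩, _⟩
      have h1 : w ⟨0, by omega⟩ = 1 := hfirst (by omega)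
      rw [h1] at hlast; omega
    rw [hempty, gset_zero]
    simp
  have hinj : Set.InjOn (drop nn) {w : Fin (nn+1) → ℕ | w ∈ gset (K+1) (nn+1) ∧
      ∀ j : ℕ, ∀ h : j < nn, w ⟨j, by omega⟩ ≠ K+1} := by
    rintro w1 ⟨hw1, _⟩ w2 ⟨hw2, _⟩ heq
    funext i
    rcases lt_or_ge i.1 nn with hi | hi
    · have h2 := congrFun heq ⟨i.1, hi⟩
      rw [drop_apply, drop_apply] at h2
      have hieq : i = ⟨i.1, i.2⟩ := Fin.ext rfl
      rw [hieq]; exact h2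
    · have hieq : i = ⟨nn, by omega⟩ := Fin.ext (show i.1 = nn by omega)
      obtain ⟨_, hl1⟩ := hw1.2.2.2.2
      obtain ⟨_, hl2⟩ := hw2.2.2.2.2
      rw [hieq]
      exact hl1.trans hl2.symm
  have himg : (drop nn) '' {w : Fin (nn+1) → ℕ | w ∈ gset (K+1) (nn+1) ∧
      ∀ j : ℕ, ∀ h : j < nn, w ⟨j, by omega⟩ ≠ K+1} = gset K nn := by
    ext u
    constructor
    · rintro ⟨w, hwS, rfl⟩
      obtain ⟨hw, hfib⟩ := hwS
      obtain ⟨⟨hpos, hfirst, hadj⟩, hne, hle, _, _, hlast⟩ := hw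
      have hlast' : w ⟨nn, by omega⟩ = K + 1 := hlast
      have hpen : w ⟨nn - 1, by omega⟩ = K := by
        have h1 := hadj (nn-1) (by omega)
        have h2 := hne (nn-1) (by omega)
        have hmk : (⟨nn-1+1, by omega⟩ : Fin (nn+1)) = ⟨nn, by omega⟩ :=
          Fin.ext (show nn-1+1 = nn by omega)
        rw [hmk, hlast'] at h1 h2
        have h3 := hle ⟨nn-1, by omega⟩
        have h4 := hfib (nn-1) (by omega)
        omega
      refine ⟨⟨fun i => hpos _, fun h => hfirst _, fun i h => hadj i (by omega)⟩,
        fun i h => hne i (by omega), fun i => ?_, ⟨⟨nn-1, by omega⟩, hpen⟩,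
        h0, hpen⟩
      have ha := hle ⟨i.1, Nat.lt_succ_of_lt i.2⟩
      have hb := hfib i.1 i.2
      have hieq : i = ⟨i.1, i.2⟩ := Fin.ext rfl
      rw [hieq, drop_apply]
      omega
    · intro hu
      obtain ⟨⟨hposu, hfirstu, hadju⟩, hneu, hleu, _, h0', hlastu⟩ := hu
      have hlastu' : u ⟨nn - 1, by omega⟩ = K := hlastu
      refine ⟨snocc nn (K+1) u, ⟨⟨⟨?_, ?_, ?_⟩, ?_, ?_, ?_, ?_⟩, ?_⟩, ?_⟩
      · intro i
        rcases lt_or_ge i.1 nn with hi | hi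
        · have hieq : i = ⟨i.1, i.2⟩ := Fin.ext rfl
          rw [hieq, snocc_lt nn (K+1) u i.1 hi]; exact hposu _
        · have hieq : i = ⟨nn, by omega⟩ := Fin.ext (show i.1 = nn by omega)
          rw [hieq, snocc_last]; omega
      · intro h
        rw [snocc_lt nn (K+1) u 0 h0]; exact hfirstu h0
      · intro i h
        rcases lt_or_ge (i+1) nn with hi | hi
        · rw [snocc_lt nn (K+1) u (i+1) hi, snocc_lt nn (K+1) u i (by omega)]
          exact hadju i hi
        · have hmk : (⟨i+1, h⟩ : Fin (nn+1)) = ⟨nn, by omega⟩ :=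
            Fin.ext (show i+1 = nn by omega)
          rw [hmk, snocc_last, snocc_lt nn (K+1) u i (by omega)]
          have hmk2 : (⟨i, by omega⟩ : Fin nn) = ⟨nn-1, by omega⟩ :=
            Fin.ext (show i = nn-1 by omega)
          rw [hmk2, hlastu']
      · intro i h
        rcases lt_or_ge (i+1) nn with hi | hi
        · rw [snocc_lt nn (K+1) u (i+1) hi, snocc_lt nn (K+1) u i (by omega)]
          exact hneu i hi
        · have hmk : (⟨i+1, h⟩ : Fin (nn+1)) = ⟨nn, by omega⟩ :=
            Fin.ext (show i+1 = nn by omega)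
          rw [hmk, snocc_last, snocc_lt nn (K+1) u i (by omega)]
          have := hleu ⟨i, by omega⟩
          omega
      · intro i
        rcases lt_or_ge i.1 nn with hi | hi
        · have hieq : i = ⟨i.1, i.2⟩ := Fin.ext rfl
          rw [hieq, snocc_lt nn (K+1) u i.1 hi]
          have := hleu ⟨i.1, hi⟩; omega
        · have hieq : i = ⟨nn, by omega⟩ := Fin.ext (show i.1 = nn by omega)
          rw [hieq, snocc_last]
      · exact ⟨⟨nn, by omega⟩, snocc_last nn (K+1) u (by omega)⟩
      · exact ⟨by omega, snocc_last nn (K+1) u (by omega)⟩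
      · intro j h
        rw [snocc_lt nn (K+1) u j h]
        have := hleu ⟨j, h⟩; omega
      · funext j
        have hieq : j = ⟨j.1, j.2⟩ := Fin.ext rfl
        rw [hieq, drop_apply, snocc_lt nn (K+1) u j.1 j.2]
  rw [← himg, Set.ncard_image_of_injOn hinj]


/-- split a word of length `l + k + 1` into its first `l` letters and the
`k` letters after them -/
def split (l k : ℕ) (w : Fin (l+k+1) → ℕ) : (Fin l → ℕ) × (Fin k → ℕ) :=
  (fun i => w ⟨i.1, by omega⟩, fun j => w ⟨l + j.1, by omega⟩)

lemma split_fst (l k : ℕ) (w : Fin (l+k+1) → ℕ) (j : ℕ) (h : j < l) :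
    (split l k w).1 ⟨j, h⟩ = w ⟨j, by omega⟩ := rfl

lemma split_snd (l k : ℕ) (w : Fin (l+k+1) → ℕ) (j : ℕ) (h : j < k) :
    (split l k w).2 ⟨j, h⟩ = w ⟨l + j, by omega⟩ := rfl

/-- glue a word of length `l`, a word of length `k` and a final letter `c` -/
def glue (l k c : ℕ) (u : Fin l → ℕ) (v : Fin k → ℕ) : Fin (l+k+1) → ℕ :=
  fun i => if h : i.1 < l then u ⟨i.1, h⟩
    else if h' : i.1 < l + k then v ⟨i.1 - l, by omega⟩ else c

lemma glue_lt (l k c : ℕ) (u : Fin l → ℕ) (v : Fin k → ℕ) (j : ℕ) (h : j < l)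
    (h' : j < l+k+1) : glue l k c u v ⟨j, h'⟩ = u ⟨j, h⟩ := by
  simp only [glue]; rw [dif_pos h]

lemma glue_mid (l k c : ℕ) (u : Fin l → ℕ) (v : Fin k → ℕ) (j : ℕ) (h1 : l ≤ j)
    (h2 : j < l + k) (h' : j < l+k+1) :
    glue l k c u v ⟨j, h'⟩ = v ⟨j - l, by omega⟩ := by
  simp only [glue]; rw [dif_neg (by omega), dif_pos h2]

lemma glue_last (l k c : ℕ) (u : Fin l → ℕ) (v : Fin k → ℕ) (h' : l + k < l+k+1) :
    glue l k c u v ⟨l + k, h'⟩ = c := by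
  simp only [glue]; rw [dif_neg (by omega), dif_neg (by omega)]

lemma fiberB (K l k : ℕ) (hl : 1 ≤ l) (hk : 1 ≤ k) :
    {w : Fin (l+k+1) → ℕ | w ∈ gset (K+1) (l+k+1) ∧
      w ⟨l-1, by omega⟩ = K+1 ∧
      ∀ j : ℕ, l ≤ j → ∀ h : j < l+k, w ⟨j, by omega⟩ ≠ K+1}.ncard
    = (gset (K+1) l).ncard * (hset K k).ncard := by
  rw [← ncard_prod]
  have hinj : Set.InjOn (split l k) {w : Fin (l+k+1) → ℕ | w ∈ gset (K+1) (l+k+1) ∧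
      w ⟨l-1, by omega⟩ = K+1 ∧
      ∀ j : ℕ, l ≤ j → ∀ h : j < l+k, w ⟨j, by omega⟩ ≠ K+1} := by
    rintro w1 ⟨hw1, _, _⟩ w2 ⟨hw2, _, _⟩ heq
    funext i
    have hieq : i = ⟨i.1, i.2⟩ := Fin.ext rfl
    rcases lt_or_ge i.1 l with hi | hi
    · have h2 := congrFun (congrArg Prod.fst heq) ⟨i.1, hi⟩
      rw [split_fst, split_fst] at h2
      rw [hieq]; exact h2
    rcases lt_or_ge i.1 (l + k) with hi2 | hi2
    · have h2 := congrFun (congrArg Prod.snd heq) ⟨i.1 - l, by omega⟩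
      rw [split_snd, split_snd] at h2
      have hmk : (⟨l + (i.1 - l), by omega⟩ : Fin (l+k+1)) = ⟨i.1, i.2⟩ :=
        Fin.ext (show l + (i.1 - l) = i.1 by omega)
      rw [hmk] at h2
      rw [hieq]; exact h2
    · have hieq2 : i = ⟨l + k, by omega⟩ := Fin.ext (show i.1 = l + k by omega)
      obtain ⟨_, hl1⟩ := hw1.2.2.2.2
      obtain ⟨_, hl2⟩ := hw2.2.2.2.2
      rw [hieq2]
      exact hl1.trans hl2.symm
  have himg : (split l k) '' {w : Fin (l+k+1) → ℕ | w ∈ gset (K+1) (l+k+1) ∧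
      w ⟨l-1, by omega⟩ = K+1 ∧
      ∀ j : ℕ, l ≤ j → ∀ h : j < l+k, w ⟨j, by omega⟩ ≠ K+1}
      = (gset (K+1) l) ×ˢ (hset K k) := by
    ext p
    constructor
    · rintro ⟨w, hwS, rfl⟩
      obtain ⟨hw, hocc, hfib⟩ := hwS
      obtain ⟨⟨hpos, hfirst, hadj⟩, hne, hle, _, _, hlast⟩ := hw
      have hlast' : w ⟨l + k, by omega⟩ = K + 1 := hlast
      have hpen : w ⟨l + k - 1, by omega⟩ = K := by
        have h1 := hadj (l+k-1) (by omega)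
        have h2 := hne (l+k-1) (by omega)
        have e1 : w (⟨l+k-1+1, by omega⟩ : Fin (l+k+1)) = w ⟨l+k, by omega⟩ :=
          congrArg w (Fin.ext (show l+k-1+1 = l+k by omega))
        have h3 := hle ⟨l+k-1, by omega⟩
        have h4 := hfib (l+k-1) (by omega) (by omega)
        omega
      constructor
      · -- first component in gset (K+1) l
        refine ⟨⟨fun i => hpos _, fun h => hfirst _, fun i h => hadj i (by omega)⟩,
          fun i h => hne i (by omega), fun i => hle _, ?_, hl, ?_⟩
        · exact ⟨⟨l-1, by omega⟩, hocc⟩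
        · exact hocc
      · -- second component in hset K k
        refine ⟨fun j => ?_, fun j h => ?_, hk, ?_⟩
        · rcases j with ⟨jv, hjv⟩
          rw [split_snd]
          refine ⟨hpos _, ?_⟩
          have h1 := hle ⟨l + jv, by omega⟩
          have h2 := hfib (l + jv) (by omega) (by omega)
          omega
        · exact ⟨hadj (l+j) (by omega), hne (l+j) (by omega)⟩
        · rw [split_snd]
          have e1 : w (⟨l + (k-1), by omega⟩ : Fin (l+k+1)) = w ⟨l+k-1, by omega⟩ :=
            congrArg w (Fin.ext (show l+(k-1) = l+k-1 by omega))
          omega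
    · rintro ⟨hu, hv⟩
      obtain ⟨⟨hposu, hfirstu, hadju⟩, hneu, hleu, _, h0u, hlastu⟩ := hu
      obtain ⟨hboundv, hadjv, h0v, hlastv⟩ := hv
      have hlastu' : p.1 ⟨l - 1, by omega⟩ = K + 1 := hlastu
      have hlastv' : p.2 ⟨k - 1, by omega⟩ = K := hlastv
      refine ⟨glue l k (K+1) p.1 p.2, ⟨⟨⟨?_, ?_, ?_⟩, ?_, ?_, ?_, ?_⟩, ?_, ?_⟩, ?_⟩
      · -- positivity
        rintro ⟨iv, hiv⟩
        rcases lt_or_ge iv l with hi | hi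
        · rw [glue_lt l k (K+1) p.1 p.2 iv hi]; exact hposu _
        rcases lt_or_ge iv (l+k) with hi2 | hi2
        · rw [glue_mid l k (K+1) p.1 p.2 iv hi hi2]
          exact (hboundv _).1
        · have e1 : glue l k (K+1) p.1 p.2 ⟨iv, hiv⟩ = K+1 :=
            (congrArg _ (Fin.ext (show iv = l+k by omega))).trans
              (glue_last l k (K+1) p.1 p.2 (by omega))
          omega
      · -- first letter
        intro h
        rw [glue_lt l k (K+1) p.1 p.2 0 hl]; exact hfirstu hl
      · -- catalan adjacency
        intro i h
        rcases lt_or_ge (i+1) l with hi | hi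
        · rw [glue_lt l k (K+1) p.1 p.2 (i+1) hi, glue_lt l k (K+1) p.1 p.2 i (by omega)]
          exact hadju i hi
        rcases lt_or_ge (i+1) (l+k) with hi2 | hi2
        · rw [glue_mid l k (K+1) p.1 p.2 (i+1) hi hi2]
          rcases lt_or_ge i l with hil | hil
          · rw [glue_lt l k (K+1) p.1 p.2 i hil]
            have e1 : p.1 (⟨i, hil⟩ : Fin l) = p.1 ⟨l-1, by omega⟩ :=
              congrArg _ (Fin.ext (show i = l-1 by omega))
            have h1 := (hboundv ⟨i+1-l, by omega⟩).2
            omega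
          · rw [glue_mid l k (K+1) p.1 p.2 i hil (by omega)]
            have h1 := (hadjv (i-l) (by omega)).1
            have e1 : p.2 (⟨i-l+1, by omega⟩ : Fin k) = p.2 ⟨i+1-l, by omega⟩ :=
              congrArg _ (Fin.ext (show i-l+1 = i+1-l by omega))
            omega
        · have e1 : glue l k (K+1) p.1 p.2 ⟨i+1, h⟩ = K+1 :=
            (congrArg _ (Fin.ext (show i+1 = l+k by omega))).trans
              (glue_last l k (K+1) p.1 p.2 (by omega))
          rw [glue_mid l k (K+1) p.1 p.2 i (by omega) (by omega)]
          have e2 : p.2 (⟨i-l, by omega⟩ : Fin k) = p.2 ⟨k-1, by omega⟩ :=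
            congrArg _ (Fin.ext (show i-l = k-1 by omega))
          omega
      · -- no equal adjacent
        intro i h
        rcases lt_or_ge (i+1) l with hi | hi
        · rw [glue_lt l k (K+1) p.1 p.2 (i+1) hi, glue_lt l k (K+1) p.1 p.2 i (by omega)]
          exact hneu i hi
        rcases lt_or_ge (i+1) (l+k) with hi2 | hi2
        · rw [glue_mid l k (K+1) p.1 p.2 (i+1) hi hi2]
          rcases lt_or_ge i l with hil | hil
          · rw [glue_lt l k (K+1) p.1 p.2 i hil]
            have e1 : p.1 (⟨i, hil⟩ : Fin l) = p.1 ⟨l-1, by omega⟩ :=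
              congrArg _ (Fin.ext (show i = l-1 by omega))
            have h1 := (hboundv ⟨i+1-l, by omega⟩).2
            omega
          · rw [glue_mid l k (K+1) p.1 p.2 i hil (by omega)]
            have h1 := (hadjv (i-l) (by omega)).2
            have e1 : p.2 (⟨i-l+1, by omega⟩ : Fin k) = p.2 ⟨i+1-l, by omega⟩ :=
              congrArg _ (Fin.ext (show i-l+1 = i+1-l by omega))
            omega
        · have e1 : glue l k (K+1) p.1 p.2 ⟨i+1, h⟩ = K+1 :=
            (congrArg _ (Fin.ext (show i+1 = l+k by omega))).trans
              (glue_last l k (K+1) p.1 p.2 (by omega))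
          rw [glue_mid l k (K+1) p.1 p.2 i (by omega) (by omega)]
          have e2 : p.2 (⟨i-l, by omega⟩ : Fin k) = p.2 ⟨k-1, by omega⟩ :=
            congrArg _ (Fin.ext (show i-l = k-1 by omega))
          have h1 := (hboundv ⟨i-l, by omega⟩).2
          omega
      · -- bounded by K+1
        rintro ⟨iv, hiv⟩
        rcases lt_or_ge iv l with hi | hi
        · rw [glue_lt l k (K+1) p.1 p.2 iv hi]; exact hleu _
        rcases lt_or_ge iv (l+k) with hi2 | hi2
        · rw [glue_mid l k (K+1) p.1 p.2 iv hi hi2]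
          have h1 := (hboundv ⟨iv-l, by omega⟩).2
          omega
        · have e1 : glue l k (K+1) p.1 p.2 ⟨iv, hiv⟩ = K+1 :=
            (congrArg _ (Fin.ext (show iv = l+k by omega))).trans
              (glue_last l k (K+1) p.1 p.2 (by omega))
          omega
      · -- attains K+1
        exact ⟨⟨l+k, by omega⟩, glue_last l k (K+1) p.1 p.2 (by omega)⟩
      · -- last letter
        exact ⟨by omega, glue_last l k (K+1) p.1 p.2 (by omega)⟩
      · -- occurrence at l-1
        rw [glue_lt l k (K+1) p.1 p.2 (l-1) (by omega)]
        exact hlastu'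
      · -- no occurrence in the middle
        intro j hj hjh
        rw [glue_mid l k (K+1) p.1 p.2 j hj hjh]
        have h1 := (hboundv ⟨j-l, by omega⟩).2
        omega
      · -- split ∘ glue = id
        have e1 : (split l k (glue l k (K+1) p.1 p.2)).1 = p.1 := by
          funext j
          rcases j with ⟨jv, hjv⟩
          rw [split_fst, glue_lt l k (K+1) p.1 p.2 jv hjv]
        have e2 : (split l k (glue l k (K+1) p.1 p.2)).2 = p.2 := by
          funext j
          rcases j with ⟨jv, hjv⟩
          rw [split_snd, glue_mid l k (K+1) p.1 p.2 (l+jv) (by omega) (by omega)]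
          exact congrArg _ (Fin.ext (show l + jv - l = jv by omega))
        exact Prod.ext e1 e2
  rw [← himg, Set.ncard_image_of_injOn hinj]


def lastHi (M n : ℕ) (w : Fin n → ℕ) : ℕ :=
  Nat.findGreatest (fun l => ∃ h : l - 1 < n, 0 < l ∧ l < n ∧ w ⟨l - 1, h⟩ = M) (n - 1)

lemma lastHi_le (M n : ℕ) (w : Fin n → ℕ) : lastHi M n w ≤ n - 1 :=
  Nat.findGreatest_le _

lemma lastHi_eq_zero_iff (M n : ℕ) (w : Fin n → ℕ) (hn : 0 < n) :
    lastHi M n w = 0 ↔ ∀ j : ℕ, ∀ h : j < n - 1, w ⟨j, by omega⟩ ≠ M := by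
  rw [lastHi, Nat.findGreatest_eq_zero_iff]
  constructor
  · intro H j hj hwj
    exact H (show 0 < j+1 by omega) (show j+1 ≤ n-1 by omega)
      ⟨by omega, by omega, by omega, hwj⟩
  · rintro H l h1 h2 ⟨h, hl0, hln', hwl⟩
    exact H (l-1) (by omega) hwl

lemma lastHi_eq_iff (M n : ℕ) (w : Fin n → ℕ) (l : ℕ) (hl : 0 < l) (hln : l < n) :
    lastHi M n w = l ↔
      ((∃ h : l-1 < n, w ⟨l-1, h⟩ = M) ∧
        ∀ j : ℕ, l ≤ j → ∀ h : j < n - 1, w ⟨j, by omega⟩ ≠ M) := by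
  have hle := lastHi_le M n w
  constructor
  · intro H
    have ha : lastHi M n w =
        Nat.findGreatest (fun l => ∃ h : l - 1 < n, 0 < l ∧ l < n ∧ w ⟨l - 1, h⟩ = M)
          (n - 1) := rfl
    have hP := Nat.findGreatest_of_ne_zero (ha.symm.trans H) (by omega)
    obtain ⟨h, _, _, hwl⟩ := hP
    refine ⟨⟨by omega, hwl⟩, ?_⟩
    intro j hj hjn hwj
    have hgr := Nat.findGreatest_is_greatest (ha.symm.trans H ▸ (show l < j + 1 by omega))
      (show j+1 ≤ n-1 by omega)
    exact hgr ⟨by omega, by omega, by omega, hwj⟩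
  · rintro ⟨⟨h, hwl⟩, Hafter⟩
    have h1 : l ≤ lastHi M n w :=
      Nat.le_findGreatest (by omega) ⟨by omega, hl, hln, hwl⟩
    have h2 : lastHi M n w ≤ l := by
      by_contra hc
      push_neg at hc
      have ha : lastHi M n w =
          Nat.findGreatest (fun l => ∃ h : l - 1 < n, 0 < l ∧ l < n ∧ w ⟨l - 1, h⟩ = M)
            (n - 1) := rfl
      have hP := Nat.findGreatest_of_ne_zero ha.symm (by omega)
      obtain ⟨hh, hpos, hlt, hw⟩ := hP
      exact Hafter (lastHi M n w - 1) (by omega) (by omega) hw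
    omega



lemma hset_zero (M : ℕ) : hset M 0 = ∅ := by
  ext w; simp [hset]

lemma fiberA' (K n : ℕ) (hK : 1 ≤ K) (hn : 1 ≤ n) :
    {w : Fin n → ℕ | w ∈ gset (K+1) n ∧
      ∀ j : ℕ, ∀ h : j < n - 1, w ⟨j, by omega⟩ ≠ K+1}.ncard
    = (gset K (n-1)).ncard := by
  obtain ⟨nn, rfl⟩ : ∃ nn, n = nn + 1 := ⟨n-1, by omega⟩
  exact fiberA K nn hK

lemma fiberB' (K l n : ℕ) (hl : 1 ≤ l) (hn : l + 1 < n) :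
    {w : Fin n → ℕ | w ∈ gset (K+1) n ∧ (w ⟨l-1, by omega⟩ = K+1) ∧
      ∀ j : ℕ, l ≤ j → ∀ h : j < n - 1, w ⟨j, by omega⟩ ≠ K+1}.ncard
    = (gset (K+1) l).ncard * (hset K (n - 1 - l)).ncard := by
  obtain ⟨k, rfl⟩ : ∃ k, n = l + k + 1 := ⟨n - l - 1, by omega⟩
  have h2 : l + k + 1 - 1 - l = k := by omega
  rw [h2]
  exact fiberB K l k hl (by omega)

lemma fiber_empty_top (K nn : ℕ) (hnn : 1 ≤ nn) :
    {w : Fin (nn+1) → ℕ | w ∈ gset (K+1) (nn+1) ∧ lastHi (K+1) (nn+1) w = nn} = ∅ := by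
  ext w
  simp only [Set.mem_setOf_eq, Set.mem_empty_iff_false, iff_false]
  rintro ⟨hw, hl⟩
  rw [lastHi_eq_iff _ _ _ _ (by omega) (by omega)] at hl
  obtain ⟨⟨h, hwl⟩, _⟩ := hl
  obtain ⟨⟨_, _, hadj⟩, hne, hle, _, _, hlast⟩ := hw
  have hlast' : w ⟨nn, by omega⟩ = K+1 := hlast
  have h2 := hne (nn-1) (by omega)
  have e1 : w (⟨nn-1+1, by omega⟩ : Fin (nn+1)) = w ⟨nn, by omega⟩ :=
    congrArg w (Fin.ext (show nn-1+1 = nn by omega))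
  have hwl' : w ⟨nn-1, by omega⟩ = K+1 := hwl
  omega

lemma main_count (K nn : ℕ) (hK : 1 ≤ K) :
    (gset (K+1) (nn+1)).ncard
      = (gset K nn).ncard +
        ∑ l ∈ Finset.range (nn+1), (gset (K+1) l).ncard * (hset K (nn - l)).ncard := by
  have hF : (gset (K+1) (nn+1)).ncard = ((gset_finite (K+1) (nn+1)).toFinset).card :=
    Set.ncard_eq_toFinset_card _ (gset_finite (K+1) (nn+1))
  have hmap : ∀ w ∈ (gset_finite (K+1) (nn+1)).toFinset,
      lastHi (K+1) (nn+1) w ∈ Finset.range (nn+1) := by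
    intro w _
    simp only [Finset.mem_range]
    have := lastHi_le (K+1) (nn+1) w
    omega
  have hcard := Finset.card_eq_sum_card_fiberwise hmap
  have hfib : ∀ l : ℕ,
      (((gset_finite (K+1) (nn+1)).toFinset.filter
          (fun w => lastHi (K+1) (nn+1) w = l)).card)
        = {w : Fin (nn+1) → ℕ | w ∈ gset (K+1) (nn+1) ∧
            lastHi (K+1) (nn+1) w = l}.ncard := by
    intro l
    rw [← Set.ncard_coe_finset]
    congr 1
    ext w
    simp [Set.Finite.mem_toFinset]
  have h0 : {w : Fin (nn+1) → ℕ | w ∈ gset (K+1) (nn+1) ∧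
      lastHi (K+1) (nn+1) w = 0}.ncard = (gset K nn).ncard := by
    have hsetEq : {w : Fin (nn+1) → ℕ | w ∈ gset (K+1) (nn+1) ∧
          lastHi (K+1) (nn+1) w = 0}
        = {w : Fin (nn+1) → ℕ | w ∈ gset (K+1) (nn+1) ∧
            ∀ j : ℕ, ∀ h : j < nn+1-1, w ⟨j, by omega⟩ ≠ K+1} := by
      ext w
      simp only [Set.mem_setOf_eq]
      constructor
      · rintro ⟨hw, hl⟩
        rw [lastHi_eq_zero_iff _ _ _ (by omega)] at hl
        exact ⟨hw, fun j h => hl j h⟩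
      · rintro ⟨hw, hl⟩
        exact ⟨hw, (lastHi_eq_zero_iff _ _ _ (by omega)).2 (fun j h => hl j h)⟩
    rw [hsetEq]
    exact fiberA' K (nn+1) hK (by omega)
  have hmid : ∀ l : ℕ, 1 ≤ l → l < nn →
      {w : Fin (nn+1) → ℕ | w ∈ gset (K+1) (nn+1) ∧
        lastHi (K+1) (nn+1) w = l}.ncard
      = (gset (K+1) l).ncard * (hset K (nn - l)).ncard := by
    intro l hl1 hl2
    have hsetEq : {w : Fin (nn+1) → ℕ | w ∈ gset (K+1) (nn+1) ∧
          lastHi (K+1) (nn+1) w = l}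
        = {w : Fin (nn+1) → ℕ | w ∈ gset (K+1) (nn+1) ∧ (w ⟨l-1, by omega⟩ = K+1) ∧
            ∀ j : ℕ, l ≤ j → ∀ h : j < nn+1-1, w ⟨j, by omega⟩ ≠ K+1} := by
      ext w
      simp only [Set.mem_setOf_eq]
      constructor
      · rintro ⟨hw, hl⟩
        rw [lastHi_eq_iff _ _ _ _ (by omega) (by omega)] at hl
        obtain ⟨⟨h, hwl⟩, hafter⟩ := hl
        exact ⟨hw, hwl, fun j hj h => hafter j hj h⟩
      · rintro ⟨hw, hwl, hafter⟩
        refine ⟨hw, ?_⟩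
        rw [lastHi_eq_iff _ _ _ _ (by omega) (by omega)]
        exact ⟨⟨by omega, hwl⟩, fun j hj h => hafter j hj h⟩
    rw [hsetEq]
    exact fiberB' K l (nn+1) hl1 (by omega)
  have hterm : ∀ l ∈ Finset.range (nn+1),
      (((gset_finite (K+1) (nn+1)).toFinset.filter
          (fun w => lastHi (K+1) (nn+1) w = l)).card)
        = if l = 0 then (gset K nn).ncard
          else (gset (K+1) l).ncard * (hset K (nn - l)).ncard := by
    intro l hlmem
    simp only [Finset.mem_range] at hlmem
    rw [hfib l]
    rcases eq_or_ne l 0 with rfl | hl0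
    · rw [if_pos rfl, h0]
    · rw [if_neg hl0]
      rcases lt_or_ge l nn with hlt | hge
      · exact hmid l (by omega) hlt
      · have hleq : l = nn := by omega
        subst hleq
        rw [fiber_empty_top K l (by omega)]
        rw [Nat.sub_self, hset_zero]
        simp
  have hz : (gset (K+1) 0).ncard * (hset K (nn - 0)).ncard = 0 := by
    rw [gset_zero]; simp
  rw [hF]
  calc ((gset_finite (K+1) (nn+1)).toFinset).card
      = ∑ l ∈ Finset.range (nn+1),
          (((gset_finite (K+1) (nn+1)).toFinset.filter
            (fun w => lastHi (K+1) (nn+1) w = l)).card) := hcard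
    _ = ∑ l ∈ Finset.range (nn+1), (if l = 0 then (gset K nn).ncard
          else (gset (K+1) l).ncard * (hset K (nn - l)).ncard) :=
        Finset.sum_congr rfl hterm
    _ = (∑ i ∈ Finset.range nn, (if i+1 = 0 then (gset K nn).ncard
          else (gset (K+1) (i+1)).ncard * (hset K (nn - (i+1))).ncard))
        + (if (0:ℕ) = 0 then (gset K nn).ncard
          else (gset (K+1) 0).ncard * (hset K (nn - 0)).ncard) :=
        Finset.sum_range_succ' _ nn
    _ = (∑ i ∈ Finset.range nn,
          (gset (K+1) (i+1)).ncard * (hset K (nn - (i+1))).ncard)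
        + (gset K nn).ncard := by
        have hstep : ∀ i ∈ Finset.range nn, (if i+1 = 0 then (gset K nn).ncard
            else (gset (K+1) (i+1)).ncard * (hset K (nn - (i+1))).ncard)
            = (gset (K+1) (i+1)).ncard * (hset K (nn - (i+1))).ncard :=
          fun i _ => if_neg (by omega)
        rw [Finset.sum_congr rfl hstep, if_pos rfl]
    _ = (gset K nn).ncard + ((∑ i ∈ Finset.range nn,
          (gset (K+1) (i+1)).ncard * (hset K (nn - (i+1))).ncard)
          + (gset (K+1) 0).ncard * (hset K (nn - 0)).ncard) := by
        rw [hz]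
        omega
    _ = (gset K nn).ncard +
        ∑ l ∈ Finset.range (nn+1), (gset (K+1) l).ncard * (hset K (nn - l)).ncard := by
        rw [Finset.sum_range_succ']

lemma key_sum (K nn : ℕ) :
    ∑ l ∈ Finset.range (nn+1), ((gset (K+1) l).ncard : ℤ) * ((hset K (nn-l)).ncard : ℤ)
      = ∑ i ∈ Finset.range (nn+1), ((hset K i).ncard : ℤ) * ((gset (K+1) (nn-i)).ncard : ℤ) := by
  rw [← Finset.sum_range_reflect]
  apply Finset.sum_congr rfl
  intro l hl
  simp only [Finset.mem_range] at hl
  have h1 : nn + 1 - 1 - l = nn - l := by omega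
  rw [h1]
  have h2 : nn - (nn - l) = l := by omega
  rw [h2, mul_comm]

lemma H_zero : H 0 = 0 := by
  apply PowerSeries.ext; intro n
  rw [coeff_H]
  have he : hset 0 n = ∅ := by
    ext w
    simp only [hset, Set.mem_setOf_eq, Set.mem_empty_iff_false, iff_false]
    rintro ⟨hb, _, hpos, _⟩
    have := hb ⟨0, hpos⟩
    omega
  rw [he]
  simp

lemma G_one : G 1 = 1 := by simp [G]

lemma G_two : G 2 = PowerSeries.X := by
  apply PowerSeries.ext; intro n
  rw [coeff_G 2 n (by omega), PowerSeries.coeff_X]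
  rcases n with _ | n
  · rw [gset_zero]; simp
  rcases n with _ | n
  · rw [if_pos rfl]
    have hsing : gset 1 1 = {fun _ => 1} := by
      ext w
      simp only [Set.mem_singleton_iff]
      constructor
      · rintro ⟨⟨hpos, hfirst, _⟩, _, hle, _, _⟩
        funext i
        have hieq : i = ⟨0, by omega⟩ := Fin.ext (by omega)
        rw [hieq]
        exact hfirst (by omega)
      · rintro rfl
        exact ⟨⟨fun i => le_refl 1, fun h => rfl, fun i h => absurd h (by omega)⟩,
          fun i h => absurd h (by omega), fun i => le_refl 1,
          ⟨⟨0, by omega⟩, rfl⟩, by omega, rfl⟩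
    rw [hsing, Set.ncard_singleton]
    simp
  · rw [if_neg (by omega)]
    have hemp : gset 1 (n+1+1) = ∅ := by
      ext w
      simp only [Set.mem_empty_iff_false, iff_false]
      rintro ⟨⟨hpos, hfirst, _⟩, hne, hle, _, _⟩
      have h01 := hne 0 (by omega)
      have ha := hpos ⟨0, by omega⟩
      have hb := hpos ⟨0+1, by omega⟩
      have hc := hle ⟨0, by omega⟩
      have hd := hle ⟨0+1, by omega⟩
      omega
    rw [hemp]
    simp

end GRecAux

theorem G_recurrence (m : ℕ) (hm : 2 ≤ m) :
    G m * (1 - PowerSeries.X * H (m - 2)) = PowerSeries.X * G (m - 1) ∧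
    G m = PowerSeries.X * G (m - 1) + PowerSeries.X * H (m - 2) * G m := by
  have key : G m = PowerSeries.X * G (m - 1) + PowerSeries.X * H (m - 2) * G m := by
    rcases eq_or_lt_of_le hm with h2 | h3
    · rw [← h2]
      norm_num
      rw [GRecAux.G_two, GRecAux.G_one, GRecAux.H_zero]
      ring
    · obtain ⟨K, rfl⟩ : ∃ K, m = K + 2 := ⟨m - 2, by omega⟩
      have hK : 1 ≤ K := by omega
      show G (K+2) = PowerSeries.X * G (K+1) + PowerSeries.X * H K * G (K+2)
      apply PowerSeries.ext
      intro n
      rw [map_add, mul_assoc]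
      have c2 : ∀ j, (PowerSeries.coeff j) (G (K+1)) = ((GRecAux.gset K j).ncard : ℤ) :=
        fun j => GRecAux.coeff_G (K+1) j (by omega)
      have c3 : ∀ j, (PowerSeries.coeff j) (G (K+2)) =
          ((GRecAux.gset (K+1) j).ncard : ℤ) :=
        fun j => GRecAux.coeff_G (K+2) j (by omega)
      have c4 : ∀ j, (PowerSeries.coeff j) (H K) = ((GRecAux.hset K j).ncard : ℤ) :=
        fun j => GRecAux.coeff_H K j
      rcases n with _ | nn
      · rw [PowerSeries.coeff_zero_X_mul, PowerSeries.coeff_zero_X_mul, c3 0,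
          GRecAux.gset_zero]
        simp
      · rw [PowerSeries.coeff_succ_X_mul, PowerSeries.coeff_succ_X_mul, c3 (nn+1), c2 nn,
          PowerSeries.coeff_mul,
          Finset.Nat.sum_antidiagonal_eq_sum_range_succ
            (fun a b => (PowerSeries.coeff a) (H K) * (PowerSeries.coeff b) (G (K+2)))]
        have hsum : ∀ i ∈ Finset.range (nn+1),
            (PowerSeries.coeff i) (H K) * (PowerSeries.coeff (nn-i)) (G (K+2))
              = ((GRecAux.hset K i).ncard : ℤ) * ((GRecAux.gset (K+1) (nn-i)).ncard : ℤ) := by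
          intro i _
          rw [c4 i, c3 (nn-i)]
        rw [Finset.sum_congr rfl hsum, GRecAux.main_count K nn hK]
        push_cast
        rw [GRecAux.key_sum K nn]
  exact ⟨by linear_combination key, key⟩
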